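/- Let G be the group of order 128 generated by a,b,c₁,c₂ subject to a² = b² = c₁² = c₂² = 1, [a,b] = [c₁,c₂], [b,c₁] = [b,c₂] = 1, and [[G,G],G] = 1 (a central extension of (ℤ/2)⁴ by (ℤ/2)³). Writing each g ∈ G uniquely as a^{n_a} b^{n_b} c₁^{ℓ₁} c₂^{ℓ₂} [a,b]^k [a,c₁]^{d₁} [a,c₂]^{d₂}, the map α(g,g') := (-1)^{n_a(g)·n_b(g')} is a 2-cocycle on G such that every element of G is α-regular (i.e., α(g,g') = α(g',g) whenever gg' = g'g), yet α is not a 2-coboundary. -/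

import Mathlib

@[ext]
structure PT where
  na : ZMod 2
  nb : ZMod 2
  l1 : ZMod 2
  l2 : ZMod 2
  k  : ZMod 2
  d1 : ZMod 2
  d2 : ZMod 2
  deriving DecidableEq

namespace PT

instance : Mul PT :=
  ⟨fun g g' =>
    ⟨g.na + g'.na, g.nb + g'.nb, g.l1 + g'.l1, g.l2 + g'.l2,
     g.k + g'.k + g'.na * g.nb + g'.l1 * g.l2,
     g.d1 + g'.d1 + g'.na * g.l1,
     g.d2 + g'.d2 + g'.na * g.l2⟩⟩

instance : One PT := ⟨⟨0, 0, 0, 0, 0, 0, 0⟩⟩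

instance : Inv PT :=
  ⟨fun g => ⟨g.na, g.nb, g.l1, g.l2, g.k + g.na * g.nb + g.l1 * g.l2,
    g.d1 + g.na * g.l1, g.d2 + g.na * g.l2⟩⟩

@[simp] lemma mul_na (g g' : PT) : (g * g').na = g.na + g'.na := rfl
@[simp] lemma mul_nb (g g' : PT) : (g * g').nb = g.nb + g'.nb := rfl
@[simp] lemma mul_l1 (g g' : PT) : (g * g').l1 = g.l1 + g'.l1 := rfl
@[simp] lemma mul_l2 (g g' : PT) : (g * g').l2 = g.l2 + g'.l2 := rfl
@[simp] lemma mul_k (g g' : PT) :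
    (g * g').k = g.k + g'.k + g'.na * g.nb + g'.l1 * g.l2 := rfl
@[simp] lemma mul_d1 (g g' : PT) : (g * g').d1 = g.d1 + g'.d1 + g'.na * g.l1 := rfl
@[simp] lemma mul_d2 (g g' : PT) : (g * g').d2 = g.d2 + g'.d2 + g'.na * g.l2 := rfl
@[simp] lemma one_na : (1 : PT).na = 0 := rfl
@[simp] lemma one_nb : (1 : PT).nb = 0 := rfl
@[simp] lemma one_l1 : (1 : PT).l1 = 0 := rfl
@[simp] lemma one_l2 : (1 : PT).l2 = 0 := rfl
@[simp] lemma one_k : (1 : PT).k = 0 := rfl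
@[simp] lemma one_d1 : (1 : PT).d1 = 0 := rfl
@[simp] lemma one_d2 : (1 : PT).d2 = 0 := rfl
@[simp] lemma inv_na (g : PT) : g⁻¹.na = g.na := rfl
@[simp] lemma inv_nb (g : PT) : g⁻¹.nb = g.nb := rfl
@[simp] lemma inv_l1 (g : PT) : g⁻¹.l1 = g.l1 := rfl
@[simp] lemma inv_l2 (g : PT) : g⁻¹.l2 = g.l2 := rfl
@[simp] lemma inv_k (g : PT) : g⁻¹.k = g.k + g.na * g.nb + g.l1 * g.l2 := rfl
@[simp] lemma inv_d1 (g : PT) : g⁻¹.d1 = g.d1 + g.na * g.l1 := rfl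
@[simp] lemma inv_d2 (g : PT) : g⁻¹.d2 = g.d2 + g.na * g.l2 := rfl

lemma zmod2_add_self (x : ZMod 2) : x + x = 0 := by
  fin_cases x <;> rfl

lemma zmod2_mul_two (x : ZMod 2) : x * 2 = 0 := by
  fin_cases x <;> rfl

lemma zmod2_two_mul (x : ZMod 2) : 2 * x = 0 := by
  fin_cases x <;> rfl

instance : Group PT where
  mul_assoc a b c := by ext <;> simp <;> ring
  one_mul a := by ext <;> simp
  mul_one a := by ext <;> simp
  inv_mul_cancel a := by
    ext <;> simp <;>
      first
        | exact zmod2_add_self _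
        | (ring_nf; simp [zmod2_add_self, zmod2_mul_two, zmod2_two_mul])

end PT


namespace PTProof

def ptEquiv : PT ≃ (ZMod 2 × ZMod 2 × ZMod 2 × ZMod 2 × ZMod 2 × ZMod 2 × ZMod 2) where
  toFun g := (g.na, g.nb, g.l1, g.l2, g.k, g.d1, g.d2)
  invFun p := ⟨p.1, p.2.1, p.2.2.1, p.2.2.2.1, p.2.2.2.2.1, p.2.2.2.2.2.1, p.2.2.2.2.2.2⟩
  left_inv _ := rfl
  right_inv _ := rfl

lemma card_PT : Nat.card PT = 128 := by
  rw [Nat.card_congr ptEquiv]; simp [Nat.card_eq_fintype_card]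

lemma cocycle_aux (a b c d : ZMod 2) :
    (-1:ℂ)^(a.val*c.val) * (-1:ℂ)^((a+b).val*d.val)
      = (-1:ℂ)^(a.val*(c+d).val) * (-1:ℂ)^(b.val*d.val) := by
  fin_cases a <;> fin_cases b <;> fin_cases c <;> fin_cases d <;>
    simp (config := {decide := true}) [ZMod.val]

lemma pow_mul_val (x y : ZMod 2) : (-1:ℂ)^(x.val*y.val) = (-1:ℂ)^((x*y).val) := by
  fin_cases x <;> fin_cases y <;>
    simp (config := {decide := true}) [ZMod.val]

lemma comm_aux : ∀ a b p q a' b' p' q' : ZMod 2,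
    a'*b + p'*q = a*b' + p*q' → a'*p = a*p' → a'*q = a*q' → a*b' = a'*b := by decide

end PTProof

/-- The cocycle α(g,g') = (-1)^{n_a(g)·n_b(g')} on the order-128 Pollmann–Turner
group PT is a 2-cocycle that is symmetric on every commuting pair (every element
is α-regular), yet it is not a 2-coboundary: it represents a nontrivial element
of the Bogomolov multiplier B(PT). -/
theorem PT_bogomolov_multiplier :
    let α : PT → PT → ℂ := fun g g' => (-1 : ℂ) ^ (g.na.val * g'.nb.val)
    Nat.card PT = 128 ∧
    (∀ g g' g'' : PT, α g g' * α (g * g') g'' = α g (g' * g'') * α g' g'') ∧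
    (∀ g g' : PT, g * g' = g' * g → α g g' = α g' g) ∧
    ¬ ∃ β : PT → ℂ, (∀ g, ‖β g‖ = 1) ∧
        ∀ g g', α g g' = β g * β g' / β (g * g') := by
  intro α
  have hα : ∀ g g', α g g' = (-1:ℂ)^(g.na.val * g'.nb.val) := fun _ _ => rfl
  refine ⟨PTProof.card_PT, ?_, ?_, ?_⟩
  · intro g g' g''
    simp only [hα, PT.mul_na, PT.mul_nb]
    exact PTProof.cocycle_aux g.na g'.na g'.nb g''.nb
  · intro g g' hcomm
    have hk := congrArg PT.k hcomm
    have hd1 := congrArg PT.d1 hcomm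
    have hd2 := congrArg PT.d2 hcomm
    simp only [PT.mul_k, PT.mul_d1, PT.mul_d2] at hk hd1 hd2
    have h1 : g'.na * g.nb + g'.l1 * g.l2 = g.na * g'.nb + g.l1 * g'.l2 := by
      linear_combination hk
    have h2 : g'.na * g.l1 = g.na * g'.l1 := by linear_combination hd1
    have h3 : g'.na * g.l2 = g.na * g'.l2 := by linear_combination hd2
    have key : g.na * g'.nb = g'.na * g.nb :=
      PTProof.comm_aux g.na g.nb g.l1 g.l2 g'.na g'.nb g'.l1 g'.l2 h1 h2 h3
    rw [hα, hα, PTProof.pow_mul_val, PTProof.pow_mul_val, key]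
  · rintro ⟨β, hn, hc⟩
    have nz : ∀ g : PT, β g ≠ 0 := by
      intro g h0
      simpa [h0] using hn g
    have pAB : (⟨1,0,0,0,0,0,0⟩ : PT) * (⟨0,1,0,0,0,0,0⟩ : PT) = (⟨1,1,0,0,0,0,0⟩ : PT) := by decide
    have pBA : (⟨0,1,0,0,0,0,0⟩ : PT) * (⟨1,0,0,0,0,0,0⟩ : PT) = (⟨1,1,0,0,1,0,0⟩ : PT) := by decide
    have pPX : (⟨1,1,0,0,0,0,0⟩ : PT) * (⟨0,0,0,0,1,0,0⟩ : PT) = (⟨1,1,0,0,1,0,0⟩ : PT) := by decide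
    have pCD : (⟨0,0,1,0,0,0,0⟩ : PT) * (⟨0,0,0,1,0,0,0⟩ : PT) = (⟨0,0,1,1,0,0,0⟩ : PT) := by decide
    have pDC : (⟨0,0,0,1,0,0,0⟩ : PT) * (⟨0,0,1,0,0,0,0⟩ : PT) = (⟨0,0,1,1,1,0,0⟩ : PT) := by decide
    have pRX : (⟨0,0,1,1,0,0,0⟩ : PT) * (⟨0,0,0,0,1,0,0⟩ : PT) = (⟨0,0,1,1,1,0,0⟩ : PT) := by decide
    have e1 := hc (⟨1,0,0,0,0,0,0⟩ : PT) (⟨0,1,0,0,0,0,0⟩ : PT)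
    have e2 := hc (⟨0,1,0,0,0,0,0⟩ : PT) (⟨1,0,0,0,0,0,0⟩ : PT)
    have e3 := hc (⟨1,1,0,0,0,0,0⟩ : PT) (⟨0,0,0,0,1,0,0⟩ : PT)
    have e4 := hc (⟨0,0,1,0,0,0,0⟩ : PT) (⟨0,0,0,1,0,0,0⟩ : PT)
    have e5 := hc (⟨0,0,0,1,0,0,0⟩ : PT) (⟨0,0,1,0,0,0,0⟩ : PT)
    have e6 := hc (⟨0,0,1,1,0,0,0⟩ : PT) (⟨0,0,0,0,1,0,0⟩ : PT)
    have v1 : (⟨1,0,0,0,0,0,0⟩ : PT).na.val * (⟨0,1,0,0,0,0,0⟩ : PT).nb.val = 1 := rfl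
    have v2 : (⟨0,1,0,0,0,0,0⟩ : PT).na.val * (⟨1,0,0,0,0,0,0⟩ : PT).nb.val = 0 := rfl
    have v3 : (⟨1,1,0,0,0,0,0⟩ : PT).na.val * (⟨0,0,0,0,1,0,0⟩ : PT).nb.val = 0 := rfl
    have v4 : (⟨0,0,1,0,0,0,0⟩ : PT).na.val * (⟨0,0,0,1,0,0,0⟩ : PT).nb.val = 0 := rfl
    have v5 : (⟨0,0,0,1,0,0,0⟩ : PT).na.val * (⟨0,0,1,0,0,0,0⟩ : PT).nb.val = 0 := rfl
    have v6 : (⟨0,0,1,1,0,0,0⟩ : PT).na.val * (⟨0,0,0,0,1,0,0⟩ : PT).nb.val = 0 := rfl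
    rw [hα, v1, pAB] at e1
    rw [hα, v2, pBA] at e2
    rw [hα, v3, pPX] at e3
    rw [hα, v4, pCD] at e4
    rw [hα, v5, pDC] at e5
    rw [hα, v6, pRX] at e6
    norm_num at e1 e2 e3 e4 e5 e6
    rw [eq_div_iff (nz (⟨1,1,0,0,0,0,0⟩ : PT))] at e1
    rw [eq_div_iff (nz (⟨1,1,0,0,1,0,0⟩ : PT))] at e2
    rw [eq_div_iff (nz (⟨1,1,0,0,1,0,0⟩ : PT))] at e3
    rw [eq_div_iff (nz (⟨0,0,1,1,0,0,0⟩ : PT))] at e4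
    rw [eq_div_iff (nz (⟨0,0,1,1,1,0,0⟩ : PT))] at e5
    rw [eq_div_iff (nz (⟨0,0,1,1,1,0,0⟩ : PT))] at e6
    have hx1 : β (⟨1,1,0,0,0,0,0⟩ : PT) * β (⟨0,0,0,0,1,0,0⟩ : PT) = β (⟨1,1,0,0,0,0,0⟩ : PT) * (-1) := by linear_combination e2 - e3 - e1
    have hx2 : β (⟨0,0,1,1,0,0,0⟩ : PT) * β (⟨0,0,0,0,1,0,0⟩ : PT) = β (⟨0,0,1,1,0,0,0⟩ : PT) * 1 := by linear_combination e5 - e6 - e4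
    have hb1 : β (⟨0,0,0,0,1,0,0⟩ : PT) = -1 := mul_left_cancel₀ (nz (⟨1,1,0,0,0,0,0⟩ : PT)) hx1
    have hb2 : β (⟨0,0,0,0,1,0,0⟩ : PT) = 1 := mul_left_cancel₀ (nz (⟨0,0,1,1,0,0,0⟩ : PT)) hx2
    rw [hb1] at hb2
    norm_num at hb2
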